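/- For every integer l ≥ 1 there exists a real constant c > 0 such that for every n ≥ 3, every family Q of (2l+1)-element subsets of [n] that determines a non-minority ball satisfies |Q| ≥ c·n³. -/

import Mathlib

/-- `b` is a majority ball of `A` under coloring `c`:
strictly more than `|A|/2` balls of `A` have color `c b`. -/
def majBall {n : ℕ} (c : Fin n → Bool) (A : Finset (Fin n)) (b : Fin n) : Prop :=
  b ∈ A ∧ A.card < 2 * (A.filter fun x => c x = c b).card

/-- `b` is a non-minority ball of `A` under coloring `c`:
at least `|A|/2` balls of `A` have color `c b`. -/
def nonMinBall {n : ℕ} (c : Fin n → Bool) (A : Finset (Fin n)) (b : Fin n) : Prop :=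
  b ∈ A ∧ A.card ≤ 2 * (A.filter fun x => c x = c b).card

/-- A coloring `c` is legal for the answer function `a` on the query set `Q`. -/
def Legal {n : ℕ} (Q : Finset (Finset (Fin n))) (a : Finset (Fin n) → Fin n)
    (c : Fin n → Bool) : Prop :=
  ∀ T ∈ Q, majBall c T (a T)

/-- The query set `Q` determines a non-minority ball. -/
def Determines {n : ℕ} (Q : Finset (Finset (Fin n))) : Prop :=
  ∀ a : Finset (Fin n) → Fin n, (∀ T ∈ Q, a T ∈ T) → (∃ c, Legal Q a c) →
    ∃ b : Fin n, ∀ c : Fin n → Bool, Legal Q a c → nonMinBall c Finset.univ b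

/-- Co-degree: the number of queries of `Q` containing both `x` and `y`. -/
def codeg {n : ℕ} (Q : Finset (Finset (Fin n))) (x y : Fin n) : ℕ :=
  (Q.filter fun T => x ∈ T ∧ y ∈ T).card

open Finset

lemma filter_color_mem {n : ℕ} (T R : Finset (Fin n)) (b : Fin n) (hb : b ∈ R) :
    (T.filter fun z => (decide (z ∈ R)) = decide (b ∈ R)) = T ∩ R := by
  ext z; simp [hb, Finset.mem_filter, Finset.mem_inter]

lemma filter_color_not_mem {n : ℕ} (T R : Finset (Fin n)) (b : Fin n) (hb : b ∉ R) :
    (T.filter fun z => (decide (z ∈ R)) = decide (b ∈ R)) = T \ R := by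
  ext z; simp [hb, Finset.mem_filter, Finset.mem_sdiff]

lemma card_inter_union {n : ℕ} (T S P : Finset (Fin n)) (h : Disjoint S P) :
    (T ∩ (S ∪ P)).card = (T ∩ S).card + (T ∩ P).card := by
  rw [Finset.inter_union_distrib_left]
  exact Finset.card_union_of_disjoint (h.mono (Finset.inter_subset_right) (Finset.inter_subset_right))

lemma exists_common {n l : ℕ} (hl : 1 ≤ l) (x y u v : Fin n) (S : Finset (Fin n))
    (hx : x ∉ S) (hy : y ∉ S) (hu : u ∉ S) (hv : v ∉ S)
    (hxy : x ≠ y) (hxv : x ≠ v) (huy : u ≠ y) (huv : u ≠ v)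
    (T : Finset (Fin n)) (hT : T.card = 2 * l + 1)
    (hnf : ¬ (l + 1 ≤ (T ∩ S).card + (T ∩ ({x,u} : Finset (Fin n))).card ∧
              l + 1 ≤ (T ∩ S).card + (T ∩ ({y,v} : Finset (Fin n))).card ∧
              (T ∩ S).card ≤ l)) :
    ∃ b ∈ T, majBall (fun z => decide (z ∈ S ∪ {x,u})) T b ∧
      majBall (fun z => decide (z ∈ S ∪ {y,v})) T b ∧
      majBall (fun z => decide (z ∈ S)) T b := by
  have hd1 : Disjoint S ({x,u} : Finset (Fin n)) := by
    simp [Finset.disjoint_insert_right, hx, hu]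
  have hd2 : Disjoint S ({y,v} : Finset (Fin n)) := by
    simp [Finset.disjoint_insert_right, hy, hv]
  set j := (T ∩ S).card with hj
  set α := (T ∩ ({x,u} : Finset (Fin n))).card with hα
  set β := (T ∩ ({y,v} : Finset (Fin n))).card with hβ
  have hc1 : (T ∩ (S ∪ {x,u})).card = j + α := card_inter_union T S _ hd1
  have hc2 : (T ∩ (S ∪ {y,v})).card = j + β := card_inter_union T S _ hd2
  -- blue counts
  have hs1 := Finset.card_sdiff_add_card_inter T (S ∪ ({x,u} : Finset (Fin n)))
  have hs2 := Finset.card_sdiff_add_card_inter T (S ∪ ({y,v} : Finset (Fin n)))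
  have hs3 := Finset.card_sdiff_add_card_inter T S
  -- majority helpers
  have majR : ∀ (R : Finset (Fin n)) (b : Fin n), b ∈ T → b ∈ R →
      l + 1 ≤ (T ∩ R).card → majBall (fun z => decide (z ∈ R)) T b := by
    intro R b hbT hbR hcard
    refine ⟨hbT, ?_⟩
    rw [filter_color_mem T R b hbR, hT]
    omega
  have majB : ∀ (R : Finset (Fin n)) (b : Fin n), b ∈ T → b ∉ R →
      (T ∩ R).card ≤ l → majBall (fun z => decide (z ∈ R)) T b := by
    intro R b hbT hbR hcard
    refine ⟨hbT, ?_⟩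
    rw [filter_color_not_mem T R b hbR]
    have := Finset.card_sdiff_add_card_inter T R
    omega
  rcases Nat.lt_or_ge j (l+1) with hjl | hjl
  · -- j ≤ l
    rcases Nat.lt_or_ge (j + α) (l+1) with ha | ha
    · rcases Nat.lt_or_ge (j + β) (l+1) with hb | hb
      · -- all small: pick b outside everything
        have hne : (T \ (S ∪ {x,u} ∪ {y,v})).Nonempty := by
          rw [← Finset.card_pos]
          have h1 : (T ∩ (S ∪ {x,u} ∪ {y,v})).card ≤ j + α + β := by
            calc (T ∩ (S ∪ {x,u} ∪ {y,v})).card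
                = (T ∩ ((S ∪ {x,u}) ∪ {y,v})).card := by rw [Finset.union_assoc]
              _ ≤ (T ∩ (S ∪ {x,u})).card + (T ∩ ({y,v} : Finset (Fin n))).card := by
                  rw [Finset.inter_union_distrib_left]
                  exact Finset.card_union_le _ _
              _ = j + α + β := by rw [hc1]
          have h2 := Finset.card_sdiff_add_card_inter T (S ∪ ({x,u} : Finset (Fin n)) ∪ ({y,v} : Finset (Fin n)))
          omega
        obtain ⟨b, hbmem⟩ := hne
        rw [Finset.mem_sdiff] at hbmem
        obtain ⟨hbT, hbout⟩ := hbmem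
        simp only [Finset.union_assoc, Finset.mem_union, not_or] at hbout
        obtain ⟨hbS, hbxu, hbyv⟩ := hbout
        refine ⟨b, hbT, ?_, ?_, ?_⟩
        · exact majB _ b hbT (Finset.notMem_union.mpr ⟨hbS, hbxu⟩) (by omega)
        · exact majB _ b hbT (Finset.notMem_union.mpr ⟨hbS, hbyv⟩) (by omega)
        · exact majB _ b hbT hbS (by omega)
      · -- β big, α small: pick b ∈ T ∩ {y,v}
        have hne : (T ∩ ({y,v} : Finset (Fin n))).Nonempty := by
          rw [← Finset.card_pos]; omega
        obtain ⟨b, hbmem⟩ := hne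
        rw [Finset.mem_inter] at hbmem
        obtain ⟨hbT, hbyv⟩ := hbmem
        have hbS : b ∉ S := by
          rcases Finset.mem_insert.mp hbyv with h | h
          · rwa [h]
          · rw [Finset.mem_singleton] at h; rwa [h]
        have hbxu : b ∉ ({x,u} : Finset (Fin n)) := by
          rcases Finset.mem_insert.mp hbyv with h | h
          · subst h; simp [Finset.mem_insert, (Ne.symm hxy), (Ne.symm huy)]
          · rw [Finset.mem_singleton] at h; subst h
            simp [Finset.mem_insert, (Ne.symm hxv), (Ne.symm huv)]
        refine ⟨b, hbT, ?_, ?_, ?_⟩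
        · exact majB _ b hbT (Finset.notMem_union.mpr ⟨hbS, hbxu⟩) (by omega)
        · exact majR _ b hbT (Finset.mem_union_right _ hbyv) (by omega)
        · exact majB _ b hbT hbS (by omega)
    · rcases Nat.lt_or_ge (j + β) (l+1) with hb | hb
      · -- α big, β small: pick b ∈ T ∩ {x,u}
        have hne : (T ∩ ({x,u} : Finset (Fin n))).Nonempty := by
          rw [← Finset.card_pos]; omega
        obtain ⟨b, hbmem⟩ := hne
        rw [Finset.mem_inter] at hbmem
        obtain ⟨hbT, hbxu⟩ := hbmem
        have hbS : b ∉ S := by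
          rcases Finset.mem_insert.mp hbxu with h | h
          · rwa [h]
          · rw [Finset.mem_singleton] at h; rwa [h]
        have hbyv : b ∉ ({y,v} : Finset (Fin n)) := by
          rcases Finset.mem_insert.mp hbxu with h | h
          · subst h; simp [Finset.mem_insert, hxy, hxv]
          · rw [Finset.mem_singleton] at h; subst h
            simp [Finset.mem_insert, huy, huv]
        refine ⟨b, hbT, ?_, ?_, ?_⟩
        · exact majR _ b hbT (Finset.mem_union_right _ hbxu) (by omega)
        · exact majB _ b hbT (Finset.notMem_union.mpr ⟨hbS, hbyv⟩) (by omega)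
        · exact majB _ b hbT hbS (by omega)
      · exact absurd ⟨ha, hb, by omega⟩ hnf
  · -- j ≥ l+1 : pick b ∈ T ∩ S
    have hne : (T ∩ S).Nonempty := by rw [← Finset.card_pos]; omega
    obtain ⟨b, hbmem⟩ := hne
    rw [Finset.mem_inter] at hbmem
    obtain ⟨hbT, hbS⟩ := hbmem
    refine ⟨b, hbT, ?_, ?_, ?_⟩
    · exact majR _ b hbT (Finset.mem_union_left _ hbS) (by omega)
    · exact majR _ b hbT (Finset.mem_union_left _ hbS) (by omega)
    · exact majR _ b hbT hbS (by omega)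

lemma exists_failing {n l : ℕ} (hl : 1 ≤ l) (hn3 : 3 ≤ n)
    (Q : Finset (Finset (Fin n))) (hdet : Determines Q)
    (x y u v : Fin n) (S : Finset (Fin n))
    (hx : x ∉ S) (hy : y ∉ S) (hu : u ∉ S) (hv : v ∉ S)
    (hxy : x ≠ y) (hxv : x ≠ v) (huy : u ≠ y) (huv : u ≠ v) (hxu : x ≠ u) (hyv : y ≠ v)
    (hQ : ∀ T ∈ Q, T.card = 2 * l + 1)
    (hScard : S.card = (n - 1) / 2) :
    ∃ T ∈ Q, l + 1 ≤ (T ∩ S).card + (T ∩ ({x,u} : Finset (Fin n))).card ∧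
             l + 1 ≤ (T ∩ S).card + (T ∩ ({y,v} : Finset (Fin n))).card ∧
             (T ∩ S).card ≤ l := by
  by_contra hcon
  push_neg at hcon
  -- every query has a common majority ball
  have hcommon : ∀ T ∈ Q, ∃ b ∈ T, majBall (fun z => decide (z ∈ S ∪ {x,u})) T b ∧
      majBall (fun z => decide (z ∈ S ∪ {y,v})) T b ∧
      majBall (fun z => decide (z ∈ S)) T b := by
    intro T hT
    refine exists_common hl x y u v S hx hy hu hv hxy hxv huy huv T (hQ T hT) ?_
    intro ⟨h1, h2, h3⟩
    exact absurd (hcon T hT h1 h2) (by omega)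
  classical
  set a : Finset (Fin n) → Fin n := fun T =>
    if h : ∃ b ∈ T, majBall (fun z => decide (z ∈ S ∪ {x,u})) T b ∧
      majBall (fun z => decide (z ∈ S ∪ {y,v})) T b ∧
      majBall (fun z => decide (z ∈ S)) T b then h.choose else ⟨0, by omega⟩ with ha
  have haspec : ∀ T ∈ Q, a T ∈ T ∧ majBall (fun z => decide (z ∈ S ∪ {x,u})) T (a T) ∧
      majBall (fun z => decide (z ∈ S ∪ {y,v})) T (a T) ∧
      majBall (fun z => decide (z ∈ S)) T (a T) := by
    intro T hT
    have h := hcommon T hT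
    rw [ha]
    simp only [dif_pos h]
    exact h.choose_spec
  have hleg1 : Legal Q a (fun z => decide (z ∈ S ∪ {x,u})) := fun T hT => (haspec T hT).2.1
  have hleg2 : Legal Q a (fun z => decide (z ∈ S ∪ {y,v})) := fun T hT => (haspec T hT).2.2.1
  have hleg3 : Legal Q a (fun z => decide (z ∈ S)) := fun T hT => (haspec T hT).2.2.2
  obtain ⟨b, hb⟩ := hdet a (fun T hT => (haspec T hT).1) ⟨_, hleg1⟩
  have hcard_univ : (Finset.univ : Finset (Fin n)).card = n := by simp
  -- b ∉ S from c3
  have hbS : b ∉ S := by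
    intro hbS
    have h3 := (hb _ hleg3).2
    rw [filter_color_mem _ _ _ hbS, Finset.univ_inter, hcard_univ, hScard] at h3
    omega
  -- b ∈ S ∪ {x,u}
  have hR1card : (S ∪ ({x,u} : Finset (Fin n))).card = S.card + 2 := by
    rw [Finset.card_union_of_disjoint (by simp [Finset.disjoint_insert_right, hx, hu])]
    simp [Finset.card_insert_of_notMem, hxu]
  have hR2card : (S ∪ ({y,v} : Finset (Fin n))).card = S.card + 2 := by
    rw [Finset.card_union_of_disjoint (by simp [Finset.disjoint_insert_right, hy, hv])]
    simp [Finset.card_insert_of_notMem, hyv]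
  have hbR1 : b ∈ S ∪ ({x,u} : Finset (Fin n)) := by
    by_contra hbR1
    have h1 := (hb _ hleg1).2
    rw [filter_color_not_mem _ _ _ hbR1] at h1
    have hsd : ((Finset.univ : Finset (Fin n)) \ (S ∪ {x,u})).card = n - (S.card + 2) := by
      rw [Finset.card_sdiff_of_subset (Finset.subset_univ _), hcard_univ, hR1card]
    rw [hsd, hcard_univ] at h1
    omega
  have hbR2 : b ∈ S ∪ ({y,v} : Finset (Fin n)) := by
    by_contra hbR2
    have h1 := (hb _ hleg2).2
    rw [filter_color_not_mem _ _ _ hbR2] at h1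
    have hsd : ((Finset.univ : Finset (Fin n)) \ (S ∪ {y,v})).card = n - (S.card + 2) := by
      rw [Finset.card_sdiff_of_subset (Finset.subset_univ _), hcard_univ, hR2card]
    rw [hsd, hcard_univ] at h1
    omega
  rcases Finset.mem_union.mp hbR1 with h | h
  · exact hbS h
  rcases Finset.mem_union.mp hbR2 with h2 | h2
  · exact hbS h2
  simp only [Finset.mem_insert, Finset.mem_singleton] at h h2
  rcases h with rfl | rfl <;> rcases h2 with h2 | h2 <;> simp_all

lemma coverage {n l : ℕ} (hl : 1 ≤ l) (hn : 12 ≤ n)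
    (Q : Finset (Finset (Fin n))) (hdet : Determines Q)
    (hQ : ∀ T ∈ Q, T.card = 2 * l + 1)
    (x y u v : Fin n)
    (hxy : x ≠ y) (hxv : x ≠ v) (huy : u ≠ y) (huv : u ≠ v) (hxu : x ≠ u) (hyv : y ≠ v) :
    n - 3 - (n - 1) / 2 ≤ (2 * l + 1) *
      (Q.filter fun T => (x ∈ T ∨ u ∈ T) ∧ (y ∈ T ∨ v ∈ T)).card := by
  classical
  set F := Q.filter fun T => (x ∈ T ∨ u ∈ T) ∧ (y ∈ T ∨ v ∈ T) with hF
  set W := F.biUnion id with hWdef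
  have hW : W.card ≤ (2 * l + 1) * F.card := by
    calc W.card ≤ ∑ T ∈ F, (id T).card := Finset.card_biUnion_le
      _ = ∑ T ∈ F, (2 * l + 1) := by
          refine Finset.sum_congr rfl fun T hT => ?_
          exact hQ T (Finset.mem_of_mem_filter T hT)
      _ = (2 * l + 1) * F.card := by rw [Finset.sum_const, smul_eq_mul, mul_comm]
  by_contra hcon
  push_neg at hcon
  -- find S of size (n-1)/2 avoiding W and the four special balls
  have hRcard : (n - 1) / 2 ≤ ((Finset.univ : Finset (Fin n)) \ (W ∪ {x,y,u,v})).card := by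
    have h1 : (W ∪ ({x,y,u,v} : Finset (Fin n))).card ≤ W.card + 4 := by
      calc (W ∪ ({x,y,u,v} : Finset (Fin n))).card ≤ W.card + ({x,y,u,v} : Finset (Fin n)).card :=
            Finset.card_union_le _ _
        _ ≤ W.card + 4 := by
            have i1 : ({v} : Finset (Fin n)).card = 1 := Finset.card_singleton v
            have i2 := Finset.card_insert_le u ({v} : Finset (Fin n))
            have i3 := Finset.card_insert_le y ({u,v} : Finset (Fin n))
            have i4 := Finset.card_insert_le x ({y,u,v} : Finset (Fin n))
            omega
    have h2 := Finset.card_sdiff_add_card_inter (Finset.univ : Finset (Fin n)) (W ∪ {x,y,u,v})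
    have h3 : ((Finset.univ : Finset (Fin n)) ∩ (W ∪ {x,y,u,v})).card ≤ W.card + 4 := by
      rw [Finset.univ_inter]; exact h1
    have h4 : (Finset.univ : Finset (Fin n)).card = n := by simp
    omega
  obtain ⟨S, hSsub, hScard⟩ := Finset.exists_subset_card_eq hRcard
  have hSmem : ∀ z ∈ S, z ∉ W ∧ z ≠ x ∧ z ≠ y ∧ z ≠ u ∧ z ≠ v := by
    intro z hz
    have := hSsub hz
    rw [Finset.mem_sdiff] at this
    have h := this.2
    simp only [Finset.mem_union, Finset.mem_insert, Finset.mem_singleton, not_or] at h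
    tauto
  have hxS : x ∉ S := fun h => ((hSmem x h).2.1 rfl)
  have hyS : y ∉ S := fun h => ((hSmem y h).2.2.1 rfl)
  have huS : u ∉ S := fun h => ((hSmem u h).2.2.2.1 rfl)
  have hvS : v ∉ S := fun h => ((hSmem v h).2.2.2.2 rfl)
  obtain ⟨T, hTQ, h1, h2, h3⟩ := exists_failing hl (by omega) Q hdet x y u v S
    hxS hyS huS hvS hxy hxv huy huv hxu hyv hQ hScard
  -- T contains a ball of {x,u} and of {y,v}
  have hαle : (T ∩ ({x,u} : Finset (Fin n))).card ≤ 2 := by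
    calc (T ∩ ({x,u} : Finset (Fin n))).card ≤ ({x,u} : Finset (Fin n)).card :=
          Finset.card_le_card (Finset.inter_subset_right)
      _ ≤ 2 := by
          have := Finset.card_insert_le x ({u} : Finset (Fin n)); simp_all
  have hβle : (T ∩ ({y,v} : Finset (Fin n))).card ≤ 2 := by
    calc (T ∩ ({y,v} : Finset (Fin n))).card ≤ ({y,v} : Finset (Fin n)).card :=
          Finset.card_le_card (Finset.inter_subset_right)
      _ ≤ 2 := by
          have := Finset.card_insert_le y ({v} : Finset (Fin n)); simp_all
  have hαpos : 0 < (T ∩ ({x,u} : Finset (Fin n))).card := by omega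
  have hβpos : 0 < (T ∩ ({y,v} : Finset (Fin n))).card := by omega
  have hTF : T ∈ F := by
    rw [hF, Finset.mem_filter]
    refine ⟨hTQ, ?_, ?_⟩
    · obtain ⟨z, hz⟩ := Finset.card_pos.mp hαpos
      rw [Finset.mem_inter] at hz
      rcases Finset.mem_insert.mp hz.2 with h | h
      · left; exact h ▸ hz.1
      · right; rw [Finset.mem_singleton] at h; exact h ▸ hz.1
    · obtain ⟨z, hz⟩ := Finset.card_pos.mp hβpos
      rw [Finset.mem_inter] at hz
      rcases Finset.mem_insert.mp hz.2 with h | h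
      · left; exact h ▸ hz.1
      · right; rw [Finset.mem_singleton] at h; exact h ▸ hz.1
  have hTW : T ⊆ W := fun z hz => Finset.mem_biUnion.mpr ⟨T, hTF, hz⟩
  have hTS : (T ∩ S).card = 0 := by
    rw [Finset.card_eq_zero, Finset.eq_empty_iff_forall_notMem]
    intro z hz
    rw [Finset.mem_inter] at hz
    exact (hSmem z hz.2).1 (hTW hz.1)
  -- now l = 1 and all four balls in T
  have hl1 : l = 1 := by omega
  have hxuT : ({x,u} : Finset (Fin n)) ⊆ T := by
    have : T ∩ ({x,u} : Finset (Fin n)) = ({x,u} : Finset (Fin n)) := by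
      apply Finset.eq_of_subset_of_card_le (Finset.inter_subset_right)
      have hc2 : ({x,u} : Finset (Fin n)).card = 2 := by
        rw [Finset.card_insert_of_notMem (by simp [hxu]), Finset.card_singleton]
      omega
    rw [← this]
    exact Finset.inter_subset_left
  have hyvT : ({y,v} : Finset (Fin n)) ⊆ T := by
    have : T ∩ ({y,v} : Finset (Fin n)) = ({y,v} : Finset (Fin n)) := by
      apply Finset.eq_of_subset_of_card_le (Finset.inter_subset_right)
      have hc2 : ({y,v} : Finset (Fin n)).card = 2 := by
        rw [Finset.card_insert_of_notMem (by simp [hyv]), Finset.card_singleton]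
      omega
    rw [← this]
    exact Finset.inter_subset_left
  have h4sub : ({x,y,u,v} : Finset (Fin n)) ⊆ T := by
    intro z hz
    simp only [Finset.mem_insert, Finset.mem_singleton] at hz
    rcases hz with rfl | rfl | rfl | rfl
    · exact hxuT (by simp)
    · exact hyvT (by simp)
    · exact hxuT (by simp)
    · exact hyvT (by simp)
  have h4card : ({x,y,u,v} : Finset (Fin n)).card = 4 := by
    rw [Finset.card_insert_of_notMem (by simp [hxy, hxu, hxv]),
        Finset.card_insert_of_notMem (by simp [Ne.symm huy, hyv]),
        Finset.card_insert_of_notMem (by simp [huv]), Finset.card_singleton]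
  have := Finset.card_le_card h4sub
  rw [h4card, hQ T hTQ, hl1] at this
  omega

section Counting
open Finset
variable {n l : ℕ}

abbrev PT (n : ℕ) := (Fin n × Fin n) × Fin n × Fin n

def Dst {n : ℕ} (p : PT n) : Prop :=
  p.1.1 ≠ p.2.1 ∧ p.1.1 ≠ p.2.2 ∧ p.1.2 ≠ p.2.1 ∧ p.1.2 ≠ p.2.2 ∧
  p.1.1 ≠ p.1.2 ∧ p.2.1 ≠ p.2.2

instance {n : ℕ} : DecidablePred (Dst (n := n)) := fun p => by unfold Dst; infer_instance

set_option maxHeartbeats 1000000 in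
lemma key (hl : 1 ≤ l) (hn : 12 ≤ n)
    (Q : Finset (Finset (Fin n))) (hdet : Determines Q)
    (hQ : ∀ T ∈ Q, T.card = 2 * l + 1) :
    n ^ 3 ≤ 32 * (2 * l + 1) ^ 3 * Q.card := by
  classical
  have huniv3 : (univ : Finset (Fin n × Fin n × Fin n)).card = n^3 := by
    simp [Finset.card_univ]; ring
  have huniv4 : (univ : Finset (PT n)).card = n^4 := by
    simp [Finset.card_univ]; ring
  have e1 : ((univ : Finset (PT n)).filter fun p : PT n => p.1.1 = p.2.1).card ≤ n^3 := by
    refine le_trans (Finset.card_le_card_of_injOn (fun p : PT n => (p.1.1, p.1.2, p.2.2))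
      (fun a _ => Finset.mem_univ _) ?_) (le_of_eq huniv3)
    intro p hp p' hp' h
    obtain ⟨⟨a, b⟩, c, d⟩ := p
    obtain ⟨⟨a', b'⟩, c', d'⟩ := p'
    simp only [Finset.coe_filter, Set.mem_setOf_eq, Finset.mem_univ, true_and] at hp hp'
    simp only [Prod.mk.injEq] at h ⊢
    refine ⟨⟨?_, ?_⟩, ?_, ?_⟩ <;> simp_all
  have e2 : ((univ : Finset (PT n)).filter fun p : PT n => p.1.1 = p.2.2).card ≤ n^3 := by
    refine le_trans (Finset.card_le_card_of_injOn (fun p : PT n => (p.1.1, p.1.2, p.2.1))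
      (fun a _ => Finset.mem_univ _) ?_) (le_of_eq huniv3)
    intro p hp p' hp' h
    obtain ⟨⟨a, b⟩, c, d⟩ := p
    obtain ⟨⟨a', b'⟩, c', d'⟩ := p'
    simp only [Finset.coe_filter, Set.mem_setOf_eq, Finset.mem_univ, true_and] at hp hp'
    simp only [Prod.mk.injEq] at h ⊢
    refine ⟨⟨?_, ?_⟩, ?_, ?_⟩ <;> simp_all
  have e3 : ((univ : Finset (PT n)).filter fun p : PT n => p.1.2 = p.2.1).card ≤ n^3 := by
    refine le_trans (Finset.card_le_card_of_injOn (fun p : PT n => (p.1.1, p.1.2, p.2.2))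
      (fun a _ => Finset.mem_univ _) ?_) (le_of_eq huniv3)
    intro p hp p' hp' h
    obtain ⟨⟨a, b⟩, c, d⟩ := p
    obtain ⟨⟨a', b'⟩, c', d'⟩ := p'
    simp only [Finset.coe_filter, Set.mem_setOf_eq, Finset.mem_univ, true_and] at hp hp'
    simp only [Prod.mk.injEq] at h ⊢
    refine ⟨⟨?_, ?_⟩, ?_, ?_⟩ <;> simp_all
  have e4 : ((univ : Finset (PT n)).filter fun p : PT n => p.1.2 = p.2.2).card ≤ n^3 := by
    refine le_trans (Finset.card_le_card_of_injOn (fun p : PT n => (p.1.1, p.1.2, p.2.1))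
      (fun a _ => Finset.mem_univ _) ?_) (le_of_eq huniv3)
    intro p hp p' hp' h
    obtain ⟨⟨a, b⟩, c, d⟩ := p
    obtain ⟨⟨a', b'⟩, c', d'⟩ := p'
    simp only [Finset.coe_filter, Set.mem_setOf_eq, Finset.mem_univ, true_and] at hp hp'
    simp only [Prod.mk.injEq] at h ⊢
    refine ⟨⟨?_, ?_⟩, ?_, ?_⟩ <;> simp_all
  have e5 : ((univ : Finset (PT n)).filter fun p : PT n => p.1.1 = p.1.2).card ≤ n^3 := by
    refine le_trans (Finset.card_le_card_of_injOn (fun p : PT n => (p.1.1, p.2.1, p.2.2))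
      (fun a _ => Finset.mem_univ _) ?_) (le_of_eq huniv3)
    intro p hp p' hp' h
    obtain ⟨⟨a, b⟩, c, d⟩ := p
    obtain ⟨⟨a', b'⟩, c', d'⟩ := p'
    simp only [Finset.coe_filter, Set.mem_setOf_eq, Finset.mem_univ, true_and] at hp hp'
    simp only [Prod.mk.injEq] at h ⊢
    refine ⟨⟨?_, ?_⟩, ?_, ?_⟩ <;> simp_all
  have e6 : ((univ : Finset (PT n)).filter fun p : PT n => p.2.1 = p.2.2).card ≤ n^3 := by
    refine le_trans (Finset.card_le_card_of_injOn (fun p : PT n => (p.1.1, p.1.2, p.2.1))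
      (fun a _ => Finset.mem_univ _) ?_) (le_of_eq huniv3)
    intro p hp p' hp' h
    obtain ⟨⟨a, b⟩, c, d⟩ := p
    obtain ⟨⟨a', b'⟩, c', d'⟩ := p'
    simp only [Finset.coe_filter, Set.mem_setOf_eq, Finset.mem_univ, true_and] at hp hp'
    simp only [Prod.mk.injEq] at h ⊢
    refine ⟨⟨?_, ?_⟩, ?_, ?_⟩ <;> simp_all
  -- bound on the non-distinct tuples
  have hB : ((univ : Finset (PT n)).filter fun a => ¬ Dst a).card ≤ 6 * n^3 := by
    have hsub : ((univ : Finset (PT n)).filter fun a => ¬ Dst a) ⊆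
        ((univ : Finset (PT n)).filter fun p : PT n => p.1.1 = p.2.1) ∪
        (((univ : Finset (PT n)).filter fun p : PT n => p.1.1 = p.2.2) ∪
        (((univ : Finset (PT n)).filter fun p : PT n => p.1.2 = p.2.1) ∪
        (((univ : Finset (PT n)).filter fun p : PT n => p.1.2 = p.2.2) ∪
        (((univ : Finset (PT n)).filter fun p : PT n => p.1.1 = p.1.2) ∪
        ((univ : Finset (PT n)).filter fun p : PT n => p.2.1 = p.2.2))))) := by
      intro p hp
      simp only [Finset.mem_filter, Finset.mem_univ, true_and, Finset.mem_union, Dst] at hp ⊢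
      push_neg at hp
      have hp' := (Finset.mem_filter.mp hp).2
      tauto
    have c1 := Finset.card_union_le ((univ : Finset (PT n)).filter fun p : PT n => p.1.1 = p.2.1)
      (((univ : Finset (PT n)).filter fun p : PT n => p.1.1 = p.2.2) ∪
        (((univ : Finset (PT n)).filter fun p : PT n => p.1.2 = p.2.1) ∪
        (((univ : Finset (PT n)).filter fun p : PT n => p.1.2 = p.2.2) ∪
        (((univ : Finset (PT n)).filter fun p : PT n => p.1.1 = p.1.2) ∪
        ((univ : Finset (PT n)).filter fun p : PT n => p.2.1 = p.2.2)))))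
    have c2 := Finset.card_union_le ((univ : Finset (PT n)).filter fun p : PT n => p.1.1 = p.2.2)
        (((univ : Finset (PT n)).filter fun p : PT n => p.1.2 = p.2.1) ∪
        (((univ : Finset (PT n)).filter fun p : PT n => p.1.2 = p.2.2) ∪
        (((univ : Finset (PT n)).filter fun p : PT n => p.1.1 = p.1.2) ∪
        ((univ : Finset (PT n)).filter fun p : PT n => p.2.1 = p.2.2))))
    have c3 := Finset.card_union_le ((univ : Finset (PT n)).filter fun p : PT n => p.1.2 = p.2.1)
        (((univ : Finset (PT n)).filter fun p : PT n => p.1.2 = p.2.2) ∪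
        (((univ : Finset (PT n)).filter fun p : PT n => p.1.1 = p.1.2) ∪
        ((univ : Finset (PT n)).filter fun p : PT n => p.2.1 = p.2.2)))
    have c4 := Finset.card_union_le ((univ : Finset (PT n)).filter fun p : PT n => p.1.2 = p.2.2)
        (((univ : Finset (PT n)).filter fun p : PT n => p.1.1 = p.1.2) ∪
        ((univ : Finset (PT n)).filter fun p : PT n => p.2.1 = p.2.2))
    have c5 := Finset.card_union_le ((univ : Finset (PT n)).filter fun p : PT n => p.1.1 = p.1.2)
        ((univ : Finset (PT n)).filter fun p : PT n => p.2.1 = p.2.2)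
    have := Finset.card_le_card hsub
    omega
  set P := (univ : Finset (PT n)).filter Dst with hP
  have hA : n^4 ≤ 2 * P.card := by
    have hpart := Finset.card_filter_add_card_filter_not (s := (univ : Finset (PT n)))
      (p := Dst)
    have hPc : ((univ : Finset (PT n)).filter Dst).card = P.card := by rw [hP]
    have h12 : 12 * n^3 ≤ n^4 := by
      have : 12 * n^3 ≤ n * n^3 := Nat.mul_le_mul_right _ hn
      have h4 : n^4 = n * n^3 := by ring
      omega
    omega
  -- coverage lower bound for each distinct tuple
  have hcov : ∀ p ∈ P, n - 3 - (n - 1) / 2 ≤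
      (2 * l + 1) * (Q.filter fun T => (p.1.1 ∈ T ∨ p.1.2 ∈ T) ∧ (p.2.1 ∈ T ∨ p.2.2 ∈ T)).card := by
    intro p hp
    rw [hP, Finset.mem_filter] at hp
    obtain ⟨-, h1, h2, h3, h4, h5, h6⟩ := hp
    exact coverage hl hn Q hdet hQ p.1.1 p.2.1 p.1.2 p.2.2 h1 h2 h3 h4 h5 h6
  -- double counting
  have hsum1 : P.card * (n - 3 - (n - 1) / 2) ≤
      (2 * l + 1) * ∑ p ∈ P, (Q.filter fun T =>
        (p.1.1 ∈ T ∨ p.1.2 ∈ T) ∧ (p.2.1 ∈ T ∨ p.2.2 ∈ T)).card := by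
    rw [Finset.mul_sum]
    calc P.card * (n - 3 - (n - 1) / 2) = ∑ _p ∈ P, (n - 3 - (n - 1) / 2) := by
          rw [Finset.sum_const, smul_eq_mul]
      _ ≤ _ := Finset.sum_le_sum hcov
  have hswap : ∑ p ∈ (univ : Finset (PT n)), (Q.filter fun T =>
        (p.1.1 ∈ T ∨ p.1.2 ∈ T) ∧ (p.2.1 ∈ T ∨ p.2.2 ∈ T)).card
      = ∑ T ∈ Q, ((univ : Finset (PT n)).filter fun p : PT n =>
        (p.1.1 ∈ T ∨ p.1.2 ∈ T) ∧ (p.2.1 ∈ T ∨ p.2.2 ∈ T)).card := by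
    simp_rw [Finset.card_filter]
    exact Finset.sum_comm
  have hper : ∀ T ∈ Q, ((univ : Finset (PT n)).filter fun p : PT n =>
      (p.1.1 ∈ T ∨ p.1.2 ∈ T) ∧ (p.2.1 ∈ T ∨ p.2.2 ∈ T)).card ≤ (2 * (2*l+1) * n) * (2 * (2*l+1) * n) := by
    intro T hT
    have hpair : ((univ : Finset (Fin n × Fin n)).filter fun pr => pr.1 ∈ T ∨ pr.2 ∈ T).card
        ≤ 2 * (2*l+1) * n := by
      have hsub : ((univ : Finset (Fin n × Fin n)).filter fun pr => pr.1 ∈ T ∨ pr.2 ∈ T) ⊆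
          (T ×ˢ univ) ∪ (univ ×ˢ T) := by
        intro pr hpr
        simp only [Finset.mem_filter, Finset.mem_univ, true_and, Finset.mem_union,
          Finset.mem_product, and_true, true_and] at hpr ⊢
        exact hpr
      calc ((univ : Finset (Fin n × Fin n)).filter fun pr => pr.1 ∈ T ∨ pr.2 ∈ T).card
          ≤ ((T ×ˢ univ) ∪ (univ ×ˢ T)).card := Finset.card_le_card hsub
        _ ≤ (T ×ˢ (univ : Finset (Fin n))).card + ((univ : Finset (Fin n)) ×ˢ T).card :=
            Finset.card_union_le _ _
        _ = (2*l+1) * n + n * (2*l+1) := by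
            rw [Finset.card_product, Finset.card_product, hQ T hT, Finset.card_univ, Fintype.card_fin]
        _ = 2 * (2*l+1) * n := by ring
    have hprodeq : ((univ : Finset (PT n)).filter fun p : PT n =>
        (p.1.1 ∈ T ∨ p.1.2 ∈ T) ∧ (p.2.1 ∈ T ∨ p.2.2 ∈ T)) =
        ((univ : Finset (Fin n × Fin n)).filter fun pr => pr.1 ∈ T ∨ pr.2 ∈ T) ×ˢ
        ((univ : Finset (Fin n × Fin n)).filter fun pr => pr.1 ∈ T ∨ pr.2 ∈ T) := by
      rw [← Finset.univ_product_univ]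
      exact Finset.filter_product (fun pr : Fin n × Fin n => pr.1 ∈ T ∨ pr.2 ∈ T)
        (fun pr : Fin n × Fin n => pr.1 ∈ T ∨ pr.2 ∈ T)
    rw [hprodeq, Finset.card_product]
    exact Nat.mul_le_mul hpair hpair
  have hsum2 : ∑ T ∈ Q, ((univ : Finset (PT n)).filter fun p : PT n =>
      (p.1.1 ∈ T ∨ p.1.2 ∈ T) ∧ (p.2.1 ∈ T ∨ p.2.2 ∈ T)).card
      ≤ Q.card * ((2 * (2*l+1) * n) * (2 * (2*l+1) * n)) := by
    calc _ ≤ ∑ _T ∈ Q, ((2 * (2*l+1) * n) * (2 * (2*l+1) * n)) := Finset.sum_le_sum hper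
      _ = _ := by rw [Finset.sum_const, smul_eq_mul]
  have hmono : ∑ p ∈ P, (Q.filter fun T =>
        (p.1.1 ∈ T ∨ p.1.2 ∈ T) ∧ (p.2.1 ∈ T ∨ p.2.2 ∈ T)).card
      ≤ ∑ p ∈ (univ : Finset (PT n)), (Q.filter fun T =>
        (p.1.1 ∈ T ∨ p.1.2 ∈ T) ∧ (p.2.1 ∈ T ∨ p.2.2 ∈ T)).card :=
    Finset.sum_le_sum_of_subset (Finset.filter_subset _ _)
  -- combine
  have hAD : P.card * (n - 3 - (n - 1) / 2) ≤
      (2 * l + 1) * (Q.card * ((2 * (2*l+1) * n) * (2 * (2*l+1) * n))) := by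
    calc P.card * (n - 3 - (n - 1) / 2)
        ≤ (2 * l + 1) * ∑ p ∈ P, (Q.filter fun T =>
          (p.1.1 ∈ T ∨ p.1.2 ∈ T) ∧ (p.2.1 ∈ T ∨ p.2.2 ∈ T)).card := hsum1
      _ ≤ (2 * l + 1) * ∑ p ∈ (univ : Finset (PT n)), (Q.filter fun T =>
          (p.1.1 ∈ T ∨ p.1.2 ∈ T) ∧ (p.2.1 ∈ T ∨ p.2.2 ∈ T)).card :=
          Nat.mul_le_mul_left _ hmono
      _ = (2 * l + 1) * ∑ T ∈ Q, ((univ : Finset (PT n)).filter fun p : PT n =>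
          (p.1.1 ∈ T ∨ p.1.2 ∈ T) ∧ (p.2.1 ∈ T ∨ p.2.2 ∈ T)).card := by rw [hswap]
      _ ≤ _ := Nat.mul_le_mul_left _ hsum2
  have hD : n ≤ 4 * (n - 3 - (n - 1) / 2) := by omega
  have hfin : n^4 * n ≤ (2 * P.card) * (4 * (n - 3 - (n - 1) / 2)) := Nat.mul_le_mul hA hD
  have h8 : (2 * P.card) * (4 * (n - 3 - (n - 1) / 2)) = 8 * (P.card * (n - 3 - (n - 1) / 2)) := by
    ring
  have hchain : n^4 * n ≤ 8 * ((2 * l + 1) * (Q.card * ((2 * (2*l+1) * n) * (2 * (2*l+1) * n)))) := by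
    calc n^4 * n ≤ 8 * (P.card * (n - 3 - (n - 1) / 2)) := by omega
      _ ≤ _ := Nat.mul_le_mul_left _ hAD
  have hl5 : n^4 * n = n^2 * n^3 := by ring
  have hr5 : 8 * ((2 * l + 1) * (Q.card * ((2 * (2*l+1) * n) * (2 * (2*l+1) * n))))
      = n^2 * (32 * (2 * l + 1)^3 * Q.card) := by ring
  rw [hl5, hr5] at hchain
  exact Nat.le_of_mul_le_mul_left hchain (by positivity)

end Counting

lemma empty_not_det {n : ℕ} (hn : 3 ≤ n) (hdet : Determines (∅ : Finset (Finset (Fin n)))) :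
    False := by
  obtain ⟨b, hb⟩ := hdet (fun _ => ⟨0, by omega⟩) (by simp)
    ⟨fun _ => true, fun T hT => absurd hT (Finset.notMem_empty T)⟩
  have h := hb (fun z => decide (z = b)) (fun T hT => absurd hT (Finset.notMem_empty T))
  have hsub : (Finset.univ.filter fun z : Fin n => decide (z = b) = decide (b = b)) ⊆ {b} := by
    intro z hz
    simp only [Finset.mem_filter, decide_eq_decide] at hz
    simp [hz.2]
  have hcard := Finset.card_le_card hsub
  rw [Finset.card_singleton] at hcard
  have h2 : (Finset.univ : Finset (Fin n)).card ≤ 2 * (Finset.univ.filter fun z : Fin n => decide (z = b) = decide (b = b)).card := h.2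
  have h3 : (Finset.univ : Finset (Fin n)).card = n := by simp
  omega

theorem stmt_8 (l : ℕ) (hl : 1 ≤ l) :
    ∃ c : ℝ, 0 < c ∧ ∀ n : ℕ, 3 ≤ n → ∀ Q : Finset (Finset (Fin n)),
      (∀ T ∈ Q, T.card = 2 * l + 1) → Determines Q →
      c * (n : ℝ) ^ 3 ≤ (Q.card : ℝ) := by
  refine ⟨(55296 * ((2 * l + 1 : ℕ) : ℝ) ^ 3)⁻¹, by positivity, ?_⟩
  intro n hn3 Q hQcard hdet
  have hQpos : 1 ≤ Q.card := by
    rcases Q.eq_empty_or_nonempty with rfl | hne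
    · exact absurd hdet (fun h => empty_not_det hn3 h)
    · exact Finset.card_pos.mpr hne
  have hfin : n ^ 3 ≤ 55296 * (2 * l + 1) ^ 3 * Q.card := by
    rcases Nat.lt_or_ge n 12 with h12 | h12
    · have h1 : n ^ 3 ≤ 11 ^ 3 := Nat.pow_le_pow_left (by omega) 3
      have h2 : 1 ≤ (2 * l + 1) ^ 3 := Nat.one_le_pow _ _ (by omega)
      calc n ^ 3 ≤ 1331 := h1
        _ ≤ 55296 * ((2 * l + 1) ^ 3 * Q.card) := by
            have := Nat.mul_le_mul h2 hQpos
            omega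
        _ = 55296 * (2 * l + 1) ^ 3 * Q.card := by ring
    · have hk := key hl h12 Q hdet hQcard
      calc n ^ 3 ≤ 32 * (2 * l + 1) ^ 3 * Q.card := hk
        _ ≤ 55296 * (2 * l + 1) ^ 3 * Q.card := by
            have : 32 * ((2 * l + 1) ^ 3 * Q.card) ≤ 55296 * ((2 * l + 1) ^ 3 * Q.card) :=
              Nat.mul_le_mul_right _ (by omega)
            calc 32 * (2 * l + 1) ^ 3 * Q.card = 32 * ((2 * l + 1) ^ 3 * Q.card) := by ring
              _ ≤ 55296 * ((2 * l + 1) ^ 3 * Q.card) := this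
              _ = 55296 * (2 * l + 1) ^ 3 * Q.card := by ring
  have hfinR : (n : ℝ) ^ 3 ≤ 55296 * ((2 * l + 1 : ℕ) : ℝ) ^ 3 * (Q.card : ℝ) := by
    exact_mod_cast hfin
  have hA : (0 : ℝ) < 55296 * ((2 * l + 1 : ℕ) : ℝ) ^ 3 := by positivity
  rw [inv_mul_le_iff₀ hA]
  rw [mul_assoc] at hfinR ⊢
  exact hfinR
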